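/- Tightness of the maximum inequality: for the geometric pmf p_q(i) = q·(1−q)^i with 0 < q ≤ 1, the ratio (‖p_q‖_∞² + (‖p_q‖_∞ − p_q(0))²)/I_d(p_q) tends to 1 as q → 0⁺. Consequently, any constant α such that α·I_d(p) > ‖p‖_∞² + (‖p‖_∞ − p(0))² for all pmfs p with p(i) → 0 must satisfy α ≥ 1. -/

import Mathlib

open Filter Real

private lemma sqrt_pow' (x : ℝ) (h : 0 ≤ x) (n : ℕ) :
    Real.sqrt (x ^ n) = (Real.sqrt x) ^ n := by
  induction n with
  | zero => simp
  | succ n ih => rw [pow_succ, Real.sqrt_mul (pow_nonneg h n), ih, pow_succ]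

private lemma sup_geom {q : ℝ} (hq : q ∈ Set.Ioo (0:ℝ) 1) :
    (⨆ i : ℕ, q * (1 - q) ^ i) = q := by
  obtain ⟨h0, h1⟩ := hq
  apply le_antisymm
  · apply ciSup_le
    intro i
    have h2 : (1 - q) ^ i ≤ 1 := pow_le_one₀ (by linarith) (by linarith)
    nlinarith
  · have h3 : q * (1 - q) ^ (0:ℕ) ≤ ⨆ i : ℕ, q * (1 - q) ^ i := by
      apply le_ciSup (f := fun i : ℕ => q * (1 - q) ^ i)
      refine ⟨q, ?_⟩
      rintro x ⟨i, rfl⟩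
      have h2 : (1 - q) ^ i ≤ 1 := pow_le_one₀ (by linarith) (by linarith)
      simp only
      nlinarith
    simpa using h3

private lemma tsum_geom {q : ℝ} (hq : q ∈ Set.Ioo (0:ℝ) 1) :
    (∑' i : ℕ, (Real.sqrt (q * (1 - q) ^ (i + 1)) - Real.sqrt (q * (1 - q) ^ i)) ^ 2)
      = (Real.sqrt (1 - q) - 1) ^ 2 := by
  obtain ⟨h0, h1⟩ := hq
  have hq' : (0:ℝ) ≤ 1 - q := by linarith
  set s := Real.sqrt (1 - q) with hs_def
  set t := Real.sqrt q with ht_def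
  have hs : s ^ 2 = 1 - q := Real.sq_sqrt hq'
  have ht : t ^ 2 = q := Real.sq_sqrt h0.le
  have hterm : ∀ i : ℕ, (Real.sqrt (q * (1 - q) ^ (i + 1)) - Real.sqrt (q * (1 - q) ^ i)) ^ 2
      = (q * (s - 1) ^ 2) * (1 - q) ^ i := by
    intro i
    rw [Real.sqrt_mul h0.le, Real.sqrt_mul h0.le, sqrt_pow' _ hq', sqrt_pow' _ hq',
      ← hs_def, ← ht_def]
    rw [← hs, ← ht]
    ring
  rw [tsum_congr hterm, tsum_mul_left, tsum_geometric_of_lt_one hq' (by linarith)]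
  rw [sub_sub_cancel]
  field_simp [h0.ne']

private lemma ratio_eq {q : ℝ} (hq : q ∈ Set.Ioo (0:ℝ) 1) :
    ((⨆ i : ℕ, q * (1 - q) ^ i) ^ 2 + ((⨆ i : ℕ, q * (1 - q) ^ i) - q * (1 - q) ^ (0 : ℕ)) ^ 2) /
          (4 * ∑' i : ℕ, (Real.sqrt (q * (1 - q) ^ (i + 1)) - Real.sqrt (q * (1 - q) ^ i)) ^ 2)
      = (1 + Real.sqrt (1 - q)) ^ 2 / 4 := by
  obtain ⟨h0, h1⟩ := hq
  rw [sup_geom ⟨h0, h1⟩, tsum_geom ⟨h0, h1⟩]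
  set s := Real.sqrt (1 - q) with hs_def
  have hs : s ^ 2 = 1 - q := Real.sq_sqrt (by linarith)
  have hslt : s < 1 := by
    have := Real.sqrt_lt_sqrt (show (0:ℝ) ≤ 1 - q by linarith) (show 1 - q < 1 by linarith)
    simpa using this
  have hne : s - 1 ≠ 0 := by intro h; nlinarith
  have hq2 : q ^ 2 = (s - 1) ^ 2 * (1 + s) ^ 2 := by nlinarith
  field_simp
  nlinarith [hq2]

private lemma limit_one :
    Tendsto (fun q : ℝ => (1 + Real.sqrt (1 - q)) ^ 2 / 4)
      (nhdsWithin 0 (Set.Ioi 0)) (nhds 1) := by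
  have hc : ContinuousAt (fun q : ℝ => (1 + Real.sqrt (1 - q)) ^ 2 / 4) 0 := by
    fun_prop
  have := hc.tendsto
  norm_num [Real.sqrt_one] at this
  exact this.mono_left nhdsWithin_le_nhds

private lemma mem_filter : Set.Ioo (0:ℝ) 1 ∈ nhdsWithin 0 (Set.Ioi 0) := by
  rw [mem_nhdsWithin]
  refine ⟨Set.Iio 1, isOpen_Iio, by norm_num, ?_⟩
  rintro x ⟨hx1, hx2⟩
  exact ⟨hx2, hx1⟩

theorem max_inequality_tight :
    Tendsto
      (fun q : ℝ =>
        ((⨆ i : ℕ, q * (1 - q) ^ i) ^ 2 + ((⨆ i : ℕ, q * (1 - q) ^ i) - q * (1 - q) ^ (0 : ℕ)) ^ 2) /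
          (4 * ∑' i : ℕ, (Real.sqrt (q * (1 - q) ^ (i + 1)) - Real.sqrt (q * (1 - q) ^ i)) ^ 2))
      (nhdsWithin 0 (Set.Ioi 0)) (nhds 1) ∧
    ∀ α : ℝ,
      (∀ p : ℕ → ℝ, (∀ i, 0 ≤ p i) → ∑' i, p i = 1 → Tendsto p atTop (nhds 0) →
        α * (4 * ∑' i : ℕ, (Real.sqrt (p (i + 1)) - Real.sqrt (p i)) ^ 2) >
          (⨆ i, p i) ^ 2 + ((⨆ i, p i) - p 0) ^ 2) →
      1 ≤ α := by
  constructor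
  · refine Tendsto.congr' ?_ limit_one
    filter_upwards [mem_filter] with q hq
    exact (ratio_eq hq).symm
  · intro α hα
    refine le_of_tendsto limit_one ?_
    filter_upwards [mem_filter] with q hq
    obtain ⟨h0, h1⟩ := hq
    have hq' : (0:ℝ) ≤ 1 - q := by linarith
    have hgeo := hα (fun i => q * (1 - q) ^ i)
      (fun i => mul_nonneg h0.le (pow_nonneg hq' i))
      (by
        rw [tsum_mul_left, tsum_geometric_of_lt_one hq' (by linarith)]
        rw [sub_sub_cancel]
        field_simp [h0.ne'])
      (by
        have := (tendsto_pow_atTop_nhds_zero_of_lt_one hq'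
          (by linarith : 1 - q < 1)).const_mul q
        simpa using this)
    rw [sup_geom ⟨h0, h1⟩, tsum_geom ⟨h0, h1⟩] at hgeo
    set s := Real.sqrt (1 - q) with hs_def
    have hs : s ^ 2 = 1 - q := Real.sq_sqrt hq'
    have hslt : s < 1 := by
      have := Real.sqrt_lt_sqrt (show (0:ℝ) ≤ 1 - q by linarith) (show 1 - q < 1 by linarith)
      simpa using this
    have hq2 : q ^ 2 = (s - 1) ^ 2 * (1 + s) ^ 2 := by nlinarith
    have hne : s - 1 ≠ 0 := by intro h; nlinarith
    have hpos : (0:ℝ) < (s - 1) ^ 2 := sq_pos_of_ne_zero hne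
    -- hgeo : α * (4 * (s-1)^2) > q^2 + (q - q * (1-q)^0)^2
    have h4 : α * (4 * (s - 1) ^ 2) > q ^ 2 := by
      simpa using hgeo
    nlinarith [hq2, hpos]
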